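/- Let 0 < q ≤ p ≤ ∞. Then for all positive integers k and n, e_k(id : ℓ_p^n(ℝ) → ℓ_q^n(ℝ)) ≤ 4^{1/p̄} · 2^{-(k-1)/n} · n^{1/q - 1/p}, where p̄ = min(1,p). -/

import Mathlib

open scoped ENNReal

/-- The `ℓ_p` (quasi-)norm on `ℝ^n`, `0 < p ≤ ∞`. -/
noncomputable def lpnorm (p : ℝ≥0∞) {n : ℕ} (x : Fin n → ℝ) : ℝ :=
  if p = ∞ then ⨆ i, |x i| else (∑ i, |x i| ^ p.toReal) ^ (1 / p.toReal)

/-- The `k`-th dyadic entropy number of the identity `id : ℓ_p^n(ℝ) → ℓ_q^n(ℝ)`: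
the infimum of `r > 0` such that the unit ball of `ℓ_p^n` can be covered by `2^(k-1)`
balls of radius `r` in `ℓ_q^n`. -/
noncomputable def entropyLp (p q : ℝ≥0∞) (n k : ℕ) : ℝ :=
  sInf {r : ℝ | 0 < r ∧ ∃ S : Finset (Fin n → ℝ), S.card ≤ 2 ^ (k - 1) ∧
    ∀ x : Fin n → ℝ, lpnorm p x ≤ 1 → ∃ y ∈ S, lpnorm q (x - y) ≤ r}

open Finset MeasureTheory Metric
open scoped Pointwise

section AuxLemmas

/-- `(a+b)^c ≤ a^c + b^c` for `0 ≤ c ≤ 1`, real version. -/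
lemma real_rpow_add_le {a b c : ℝ} (ha : 0 ≤ a) (hb : 0 ≤ b) (hc0 : 0 ≤ c) (hc1 : c ≤ 1) :
    (a + b) ^ c ≤ a ^ c + b ^ c := by
  have h := NNReal.coe_le_coe.2 (NNReal.rpow_add_le_add_rpow a.toNNReal b.toNNReal hc0 hc1)
  push_cast [Real.coe_toNNReal _ ha, Real.coe_toNNReal _ hb] at h
  exact h

variable {n : ℕ} {p q : ℝ≥0∞}

lemma lpnorm_nonneg (p : ℝ≥0∞) (x : Fin n → ℝ) : 0 ≤ lpnorm p x := by
  unfold lpnorm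
  split
  · exact Real.iSup_nonneg fun i => abs_nonneg _
  · exact Real.rpow_nonneg (Finset.sum_nonneg fun i _ => Real.rpow_nonneg (abs_nonneg _) _) _

lemma lpnorm_fin_eq (hp : p ≠ ∞) (x : Fin n → ℝ) :
    lpnorm p x = (∑ i, |x i| ^ p.toReal) ^ (1 / p.toReal) := if_neg hp

lemma lpnorm_inf_eq (x : Fin n → ℝ) : lpnorm ∞ x = ⨆ i, |x i| := if_pos rfl

lemma lpnorm_fin_le_iff (hp0 : p ≠ 0) (hp : p ≠ ∞) {x : Fin n → ℝ} {r : ℝ} (hr : 0 ≤ r) :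
    lpnorm p x ≤ r ↔ ∑ i, |x i| ^ p.toReal ≤ r ^ p.toReal := by
  have hc : 0 < p.toReal := ENNReal.toReal_pos hp0 hp
  have hsum : 0 ≤ ∑ i, |x i| ^ p.toReal :=
    Finset.sum_nonneg fun i _ => Real.rpow_nonneg (abs_nonneg _) _
  rw [lpnorm_fin_eq hp, one_div]
  constructor
  · intro h
    have := Real.rpow_le_rpow (Real.rpow_nonneg hsum _) h hc.le
    rwa [Real.rpow_inv_rpow hsum hc.ne'] at this
  · intro h
    have := Real.rpow_le_rpow hsum h (inv_nonneg.2 hc.le)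
    rwa [Real.rpow_rpow_inv hr hc.ne'] at this

lemma lpnorm_inf_le_iff (hn : 0 < n) {x : Fin n → ℝ} {r : ℝ} :
    lpnorm ∞ x ≤ r ↔ ∀ i, |x i| ≤ r := by
  have : Nonempty (Fin n) := Fin.pos_iff_nonempty.mp hn
  rw [lpnorm_inf_eq]
  constructor
  · intro h i
    exact le_trans (le_ciSup (f := fun j => |x j|) ((Set.finite_range _).bddAbove) i) h
  · intro h
    exact ciSup_le h

lemma lpnorm_inf_eq_norm (hn : 0 < n) (x : Fin n → ℝ) : lpnorm ∞ x = ‖x‖ := by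
  have : Nonempty (Fin n) := Fin.pos_iff_nonempty.mp hn
  rw [lpnorm_inf_eq]
  refine le_antisymm (ciSup_le fun i => ?_) ?_
  · rw [← Real.norm_eq_abs]; exact norm_le_pi_norm x i
  · refine (pi_norm_le_iff_of_nonneg (Real.iSup_nonneg fun i => abs_nonneg _)).2 fun i => ?_
    rw [Real.norm_eq_abs]
    exact le_ciSup (f := fun j => |x j|) ((Set.finite_range _).bddAbove) i

lemma lpnorm_zero (hp0 : p ≠ 0) (hn : 0 < n) : lpnorm p (0 : Fin n → ℝ) = 0 := by
  have : Nonempty (Fin n) := Fin.pos_iff_nonempty.mp hn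
  by_cases hp : p = ∞
  · subst hp; rw [lpnorm_inf_eq]; simp [ciSup_const]
  · have hc : 0 < p.toReal := ENNReal.toReal_pos hp0 hp
    rw [lpnorm_fin_eq hp]
    simp [Real.zero_rpow hc.ne', Real.zero_rpow (one_div_ne_zero hc.ne'),
      Real.zero_rpow (inv_ne_zero hc.ne')]

lemma lpnorm_neg (p : ℝ≥0∞) (x : Fin n → ℝ) : lpnorm p (-x) = lpnorm p x := by
  unfold lpnorm
  simp

lemma lpnorm_smul (hp0 : p ≠ 0) {t : ℝ} (ht : 0 ≤ t) (x : Fin n → ℝ) :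
    lpnorm p (t • x) = t * lpnorm p x := by
  by_cases hp : p = ∞
  · subst hp
    rw [lpnorm_inf_eq, lpnorm_inf_eq, Real.mul_iSup_of_nonneg ht]
    congr 1; funext i
    simp [abs_mul, abs_of_nonneg ht]
  · have hc : 0 < p.toReal := ENNReal.toReal_pos hp0 hp
    have hsum : 0 ≤ ∑ i, |x i| ^ p.toReal :=
      Finset.sum_nonneg fun i _ => Real.rpow_nonneg (abs_nonneg _) _
    rw [lpnorm_fin_eq hp, lpnorm_fin_eq hp]
    have h1 : ∀ i, |(t • x) i| ^ p.toReal = t ^ p.toReal * |x i| ^ p.toReal := by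
      intro i
      simp only [Pi.smul_apply, smul_eq_mul, abs_mul, abs_of_nonneg ht]
      rw [Real.mul_rpow ht (abs_nonneg _)]
    simp only [h1, ← Finset.mul_sum]
    rw [Real.mul_rpow (by positivity) hsum, one_div,
      Real.rpow_rpow_inv ht hc.ne']

/-- The `s`-triangle inequality for `lpnorm p`, where `s = (min 1 p).toReal`. -/
lemma lpnorm_tri (hp0 : 0 < p) (hn : 0 < n) (x y : Fin n → ℝ) :
    lpnorm p (x + y) ^ (min 1 p).toReal ≤
      lpnorm p x ^ (min 1 p).toReal + lpnorm p y ^ (min 1 p).toReal := by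
  have hne : Nonempty (Fin n) := Fin.pos_iff_nonempty.mp hn
  by_cases hp : p = ∞
  · subst hp
    rw [min_eq_left le_top]
    simp only [ENNReal.toReal_one, Real.rpow_one]
    rw [lpnorm_inf_eq, lpnorm_inf_eq, lpnorm_inf_eq]
    refine ciSup_le fun i => ?_
    calc |(x + y) i| ≤ |x i| + |y i| := by simpa using abs_add_le (x i) (y i)
      _ ≤ (⨆ j, |x j|) + ⨆ j, |y j| :=
        add_le_add
          (le_ciSup (f := fun j => |x j|) (Set.Finite.bddAbove (Set.finite_range _)) i)
          (le_ciSup (f := fun j => |y j|) (Set.Finite.bddAbove (Set.finite_range _)) i)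
  · have hc : 0 < p.toReal := ENNReal.toReal_pos hp0.ne' hp
    rcases le_or_gt 1 p with h1p | h1p
    · -- 1 ≤ p : Minkowski
      rw [min_eq_left h1p]
      simp only [ENNReal.toReal_one, Real.rpow_one]
      have hc1 : 1 ≤ p.toReal := by
        rw [← ENNReal.toReal_one]
        exact ENNReal.toReal_mono hp h1p
      have := Real.Lp_add_le (Finset.univ : Finset (Fin n)) x y hc1
      rw [lpnorm_fin_eq hp, lpnorm_fin_eq hp, lpnorm_fin_eq hp]
      simpa using this
    · -- p < 1
      rw [min_eq_right h1p.le]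
      have hc1 : p.toReal ≤ 1 := by
        rw [← ENNReal.toReal_one]
        exact ENNReal.toReal_mono ENNReal.one_ne_top h1p.le
      have hpow : ∀ z : Fin n → ℝ,
          lpnorm p z ^ p.toReal = ∑ i, |z i| ^ p.toReal := by
        intro z
        rw [lpnorm_fin_eq hp, one_div, Real.rpow_inv_rpow
          (Finset.sum_nonneg fun i _ => Real.rpow_nonneg (abs_nonneg _) _) hc.ne']
      rw [hpow, hpow, hpow, ← Finset.sum_add_distrib]
      refine Finset.sum_le_sum fun i _ => ?_
      calc |(x + y) i| ^ p.toReal ≤ (|x i| + |y i|) ^ p.toReal := by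
            refine Real.rpow_le_rpow (abs_nonneg _) ?_ hc.le
            simpa using abs_add_le (x i) (y i)
        _ ≤ |x i| ^ p.toReal + |y i| ^ p.toReal :=
            real_rpow_add_le (abs_nonneg _) (abs_nonneg _) hc.le hc1

/-- Comparison of `ℓ_q` and `ℓ_p` norms for `q ≤ p`. -/
lemma lpnorm_cmp (hq : 0 < q) (hqp : q ≤ p) (hn : 0 < n) (z : Fin n → ℝ) :
    lpnorm q z ≤ (n : ℝ) ^ (q⁻¹.toReal - p⁻¹.toReal) * lpnorm p z := by
  have hne : Nonempty (Fin n) := Fin.pos_iff_nonempty.mp hn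
  by_cases hqi : q = ∞
  · have hpi : p = ∞ := top_le_iff.mp (hqi ▸ hqp)
    subst hqi; subst hpi
    simp [Real.rpow_zero]
  · have hq' : 0 < q.toReal := ENNReal.toReal_pos hq.ne' hqi
    by_cases hpi : p = ∞
    · -- p = ∞, q finite
      subst hpi
      set M := ⨆ i, |z i| with hM
      have hM0 : 0 ≤ M := Real.iSup_nonneg fun i => abs_nonneg _
      have hle : ∀ i, |z i| ≤ M := fun i =>
        le_ciSup (f := fun j => |z j|) (Set.Finite.bddAbove (Set.finite_range _)) i
      have hsum : ∑ i, |z i| ^ q.toReal ≤ (n : ℝ) * M ^ q.toReal := by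
        calc ∑ i, |z i| ^ q.toReal ≤ ∑ _i : Fin n, M ^ q.toReal :=
              Finset.sum_le_sum fun i _ =>
                Real.rpow_le_rpow (abs_nonneg _) (hle i) hq'.le
          _ = (n : ℝ) * M ^ q.toReal := by
              simp [Finset.sum_const, mul_comm]
      rw [lpnorm_fin_eq hqi, lpnorm_inf_eq, ← hM]
      simp only [ENNReal.inv_top, ENNReal.toReal_zero, sub_zero, ENNReal.toReal_inv]
      calc (∑ i, |z i| ^ q.toReal) ^ (1 / q.toReal)
          ≤ ((n : ℝ) * M ^ q.toReal) ^ (1 / q.toReal) :=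
            Real.rpow_le_rpow
              (Finset.sum_nonneg fun i _ => Real.rpow_nonneg (abs_nonneg _) _) hsum
              (by positivity)
        _ = (n : ℝ) ^ q.toReal⁻¹ * M := by
            rw [Real.mul_rpow (by positivity) (Real.rpow_nonneg hM0 _), one_div,
              Real.rpow_rpow_inv hM0 hq'.ne']
    · -- both finite
      have hp' : 0 < p.toReal := ENNReal.toReal_pos (hq.trans_le hqp).ne' hpi
      by_cases hqp' : q = p
      · subst hqp'
        simp [Real.rpow_zero]
      · have hqplt : q.toReal < p.toReal :=
          ENNReal.toReal_strict_mono hpi (lt_of_le_of_ne hqp hqp')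
        set t := p.toReal / q.toReal with htdef
        have ht1 : 1 ≤ t := (one_le_div hq').2 hqplt.le
        have key := Real.rpow_sum_le_const_mul_sum_rpow (Finset.univ : Finset (Fin n))
          (fun i => |z i| ^ q.toReal) ht1
        simp only [abs_of_nonneg (Real.rpow_nonneg (abs_nonneg _) q.toReal)] at key
        have habs : ∀ i, (|z i| ^ q.toReal) ^ t = |z i| ^ p.toReal := by
          intro i
          rw [← Real.rpow_mul (abs_nonneg _), htdef, mul_div_cancel₀ _ hq'.ne']
        simp only [habs, Finset.card_univ, Fintype.card_fin] at key
        -- key : (∑ i, |z i| ^ q.toReal) ^ t ≤ n ^ (t - 1) * ∑ i, |z i| ^ p.toReal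
        set A := ∑ i, |z i| ^ q.toReal with hA
        set B := ∑ i, |z i| ^ p.toReal with hB
        have hA0 : 0 ≤ A := Finset.sum_nonneg fun i _ => Real.rpow_nonneg (abs_nonneg _) _
        have hB0 : 0 ≤ B := Finset.sum_nonneg fun i _ => Real.rpow_nonneg (abs_nonneg _) _
        rw [lpnorm_fin_eq hqi, lpnorm_fin_eq hpi, ← hA, ← hB]
        have step1 : A ^ (1 / q.toReal) = (A ^ t) ^ (1 / p.toReal) := by
          rw [← Real.rpow_mul hA0]
          congr 1
          rw [htdef]
          field_simp
        have step2 : (A ^ t) ^ (1 / p.toReal) ≤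
            ((n : ℝ) ^ (t - 1) * B) ^ (1 / p.toReal) :=
          Real.rpow_le_rpow (Real.rpow_nonneg hA0 _) key (by positivity)
        have step3 : ((n : ℝ) ^ (t - 1) * B) ^ (1 / p.toReal) =
            (n : ℝ) ^ (q⁻¹.toReal - p⁻¹.toReal) * B ^ (1 / p.toReal) := by
          rw [Real.mul_rpow (Real.rpow_nonneg (by positivity) _) hB0,
            ← Real.rpow_mul (by positivity : (0:ℝ) ≤ (n:ℝ))]
          congr 2
          rw [ENNReal.toReal_inv, ENNReal.toReal_inv, htdef]
          field_simp
        rw [step1]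
        exact step2.trans (le_of_eq step3)

end AuxLemmas

section Cover

variable {n : ℕ} {p : ℝ≥0∞}

/-- Volumetric covering lemma: the unit ball of `ℓ_p^n` can be covered by `N` balls of
radius `ρ` (in the `ℓ_p` quasinorm), provided `N` dominates the volume ratio. -/
lemma lpnorm_exists_cover (hp0 : 0 < p) (hn : 0 < n) {ρ : ℝ} (hρ : 0 < ρ) (N : ℕ)
    (hN : (((1 + ρ ^ (min 1 p).toReal / 2) / (ρ ^ (min 1 p).toReal / 2)) ^
        (1 / (min 1 p).toReal)) ^ n ≤ (N : ℝ)) :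
    ∃ S : Finset (Fin n → ℝ), S.card ≤ N ∧
      ∀ x : Fin n → ℝ, lpnorm p x ≤ 1 → ∃ y ∈ S, lpnorm p (x - y) ≤ ρ := by
  classical
  have hne : Nonempty (Fin n) := Fin.pos_iff_nonempty.mp hn
  set s : ℝ := (min 1 p).toReal with hsdef
  have hmin0 : (min 1 p) ≠ 0 := (lt_min zero_lt_one hp0).ne'
  have hmint : (min 1 p) ≠ ∞ := ne_top_of_le_ne_top ENNReal.one_ne_top (min_le_left _ _)
  have hs0 : 0 < s := ENNReal.toReal_pos hmin0 hmint
  set ν : (Fin n → ℝ) → ℝ := lpnorm p with hν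
  have hν0 : ∀ x, 0 ≤ ν x := fun x => lpnorm_nonneg p x
  have htri : ∀ x y, ν (x + y) ^ s ≤ ν x ^ s + ν y ^ s := fun x y => lpnorm_tri hp0 hn x y
  have hneg : ∀ x, ν (-x) = ν x := fun x => lpnorm_neg p x
  have hhom : ∀ {t : ℝ}, 0 ≤ t → ∀ x, ν (t • x) = t * ν x := fun ht x => lpnorm_smul hp0.ne' ht x
  -- continuity
  have hcont : Continuous ν := by
    by_cases hpi : p = ∞
    · subst hpi
      have : ν = fun x => ‖x‖ := funext fun x => lpnorm_inf_eq_norm hn x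
      rw [this]; exact continuous_norm
    · have hc : 0 < p.toReal := ENNReal.toReal_pos hp0.ne' hpi
      have : ν = fun x : Fin n → ℝ => (∑ i, |x i| ^ p.toReal) ^ (1 / p.toReal) :=
        funext fun x => lpnorm_fin_eq hpi x
      rw [this]
      refine Continuous.rpow_const ?_ fun x => Or.inr (by positivity)
      exact continuous_finset_sum _ fun i _ =>
        Continuous.rpow_const (continuous_apply i).abs fun x => Or.inr hc.le
  have hclosed : ∀ r : ℝ, IsClosed {w : Fin n → ℝ | ν w ≤ r} := fun r =>
    isClosed_le hcont continuous_const
  set B : Set (Fin n → ℝ) := {w | ν w ≤ 1} with hBdef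
  set μ : Measure (Fin n → ℝ) := volume with hμ
  -- scaling of sublevel sets
  have hscale : ∀ {t : ℝ}, 0 < t → μ {w | ν w ≤ t} = ENNReal.ofReal (t ^ n) * μ B := by
    intro t ht
    have hset : {w | ν w ≤ t} = t • B := by
      ext z
      rw [Set.mem_smul_set_iff_inv_smul_mem₀ ht.ne']
      simp only [hBdef, Set.mem_setOf_eq]
      rw [hhom (by positivity : (0:ℝ) ≤ t⁻¹) z, inv_mul_eq_div, div_le_one ht]
    rw [hset, Measure.addHaar_smul, Module.finrank_fin_fun,
      abs_of_nonneg (pow_nonneg ht.le n)]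
  -- bounds on the volume of B
  have hBmeas : MeasurableSet B := (hclosed 1).measurableSet
  have hBpos : 0 < μ B := by
    have hlow : ∃ δ : ℝ, 0 < δ ∧ closedBall (0 : Fin n → ℝ) δ ⊆ B := by
      by_cases hpi : p = ∞
      · refine ⟨1, zero_lt_one, fun z hz => ?_⟩
        rw [mem_closedBall, dist_pi_le_iff zero_le_one] at hz
        simp only [hBdef, Set.mem_setOf_eq, hν, hpi]
        rw [lpnorm_inf_le_iff hn]
        intro i
        simpa [Real.dist_eq] using hz i
      · have hc : 0 < p.toReal := ENNReal.toReal_pos hp0.ne' hpi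
        refine ⟨(n : ℝ) ^ (-(1 / p.toReal)), by positivity, fun z hz => ?_⟩
        rw [mem_closedBall, dist_pi_le_iff (by positivity)] at hz
        simp only [hBdef, Set.mem_setOf_eq, hν]
        rw [lpnorm_fin_le_iff hp0.ne' hpi zero_le_one, Real.one_rpow]
        have hδc : ((n : ℝ) ^ (-(1 / p.toReal))) ^ p.toReal = (n : ℝ)⁻¹ := by
          rw [← Real.rpow_mul (by positivity : (0:ℝ) ≤ (n:ℝ)), neg_mul, one_div,
            inv_mul_cancel₀ hc.ne', Real.rpow_neg_one]
        calc ∑ i, |z i| ^ p.toReal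
            ≤ ∑ _i : Fin n, ((n : ℝ) ^ (-(1 / p.toReal))) ^ p.toReal := by
              refine Finset.sum_le_sum fun i _ => ?_
              refine Real.rpow_le_rpow (abs_nonneg _) ?_ hc.le
              simpa [Real.dist_eq] using hz i
          _ = 1 := by
              rw [Finset.sum_const, Finset.card_univ, Fintype.card_fin, hδc,
                nsmul_eq_mul, mul_inv_cancel₀ (by positivity : ((n:ℝ)) ≠ 0)]
    obtain ⟨δ, hδ, hsub⟩ := hlow
    exact lt_of_lt_of_le (measure_closedBall_pos μ 0 hδ) (measure_mono hsub)
  have hBfin : μ B < ∞ := by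
    have hup : B ⊆ closedBall (0 : Fin n → ℝ) 1 := by
      intro z hz
      rw [mem_closedBall, dist_pi_le_iff zero_le_one]
      intro i
      rw [Real.dist_eq, Pi.zero_apply, sub_zero]
      by_cases hpi : p = ∞
      · have := hz
        simp only [hBdef, Set.mem_setOf_eq, hν, hpi] at this
        rw [lpnorm_inf_le_iff hn] at this
        exact this i
      · have hc : 0 < p.toReal := ENNReal.toReal_pos hp0.ne' hpi
        have hz' : ∑ j, |z j| ^ p.toReal ≤ 1 := by
          have := hz
          simp only [hBdef, Set.mem_setOf_eq, hν] at this
          rw [lpnorm_fin_le_iff hp0.ne' hpi zero_le_one, Real.one_rpow] at this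
          exact this
        have hone : |z i| ^ p.toReal ≤ 1 :=
          le_trans (Finset.single_le_sum
            (fun j _ => Real.rpow_nonneg (abs_nonneg _) _) (Finset.mem_univ i)) hz'
        have := Real.rpow_le_rpow (Real.rpow_nonneg (abs_nonneg _) _) hone
          (by positivity : (0:ℝ) ≤ p.toReal⁻¹)
        rwa [Real.rpow_rpow_inv (abs_nonneg _) hc.ne', Real.one_rpow] at this
    exact lt_of_le_of_lt (measure_mono hup) (isCompact_closedBall 0 1).measure_lt_top
  -- the radii
  set r0 : ℝ := (ρ ^ s / 2) ^ (1 / s) with hr0def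
  set R : ℝ := (1 + ρ ^ s / 2) ^ (1 / s) with hRdef
  have hρs : 0 < ρ ^ s := Real.rpow_pos_of_pos hρ s
  have hr0 : 0 < r0 := Real.rpow_pos_of_pos (by linarith) _
  have hR : 0 < R := Real.rpow_pos_of_pos (by linarith) _
  have hr0s : r0 ^ s = ρ ^ s / 2 := by
    rw [hr0def, one_div, Real.rpow_inv_rpow (by linarith) hs0.ne']
  have hRs : R ^ s = 1 + ρ ^ s / 2 := by
    rw [hRdef, one_div, Real.rpow_inv_rpow (by linarith) hs0.ne']
  -- cardinality bound for separated sets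
  have card_bound : ∀ T : Finset (Fin n → ℝ), (∀ y ∈ T, ν y ≤ 1) →
      ((T : Set (Fin n → ℝ)).Pairwise fun a b => ρ < ν (a - b)) → T.card ≤ N := by
    intro T hTB hTsep
    set D : (Fin n → ℝ) → Set (Fin n → ℝ) := fun y => {z | ν (z - y) ≤ r0} with hD
    have hmeasD : ∀ y, MeasurableSet (D y) := by
      intro y
      have : D y = (fun z => -y + z) ⁻¹' {w | ν w ≤ r0} := by
        ext z; simp [hD, neg_add_eq_sub]
      rw [this]
      exact (hclosed r0).measurableSet.preimage (measurable_const_add _)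
    have hvolD : ∀ y, μ (D y) = ENNReal.ofReal (r0 ^ n) * μ B := by
      intro y
      have : D y = (fun z => -y + z) ⁻¹' {w | ν w ≤ r0} := by
        ext z; simp [hD, neg_add_eq_sub]
      rw [this, measure_preimage_add, hscale hr0]
    have hdisj : (T : Set (Fin n → ℝ)).PairwiseDisjoint D := by
      intro y₁ h1 y₂ h2 hne12
      rw [Function.onFun, Set.disjoint_left]
      intro z hz1 hz2
      have h1' : ν (z - y₁) ≤ r0 := hz1
      have h2' : ν (z - y₂) ≤ r0 := hz2
      have e1 : ν (y₁ - z) = ν (z - y₁) := by rw [← hneg (z - y₁), neg_sub]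
      have htr : ν (y₁ - y₂) ^ s ≤ ν (y₁ - z) ^ s + ν (z - y₂) ^ s := by
        have := htri (y₁ - z) (z - y₂)
        rwa [sub_add_sub_cancel] at this
      have hb1 : ν (y₁ - z) ^ s ≤ ρ ^ s / 2 := by
        rw [e1, ← hr0s]
        exact Real.rpow_le_rpow (hν0 _) h1' hs0.le
      have hb2 : ν (z - y₂) ^ s ≤ ρ ^ s / 2 := by
        rw [← hr0s]
        exact Real.rpow_le_rpow (hν0 _) h2' hs0.le
      have hsep : ρ < ν (y₁ - y₂) := hTsep h1 h2 hne12
      have : ρ ^ s < ν (y₁ - y₂) ^ s := Real.rpow_lt_rpow hρ.le hsep hs0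
      linarith
    have hsub : (⋃ y ∈ T, D y) ⊆ {w | ν w ≤ R} := by
      intro z hz
      rw [Set.mem_iUnion₂] at hz
      obtain ⟨y, hyT, hzy⟩ := hz
      have hzy' : ν (z - y) ≤ r0 := hzy
      have htr : ν z ^ s ≤ ν (z - y) ^ s + ν y ^ s := by
        have := htri (z - y) y
        rwa [sub_add_cancel] at this
      have h1 : ν (z - y) ^ s ≤ ρ ^ s / 2 := by
        rw [← hr0s]; exact Real.rpow_le_rpow (hν0 _) hzy' hs0.le
      have h2 : ν y ^ s ≤ 1 := by
        have := Real.rpow_le_rpow (hν0 y) (hTB y hyT) hs0.le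
        rwa [Real.one_rpow] at this
      have : ν z ^ s ≤ R ^ s := by rw [hRs]; linarith
      exact (Real.rpow_le_rpow_iff (hν0 z) hR.le hs0).1 this
    have hcount : (T.card : ℝ≥0∞) * (ENNReal.ofReal (r0 ^ n) * μ B) ≤
        ENNReal.ofReal (R ^ n) * μ B := by
      calc (T.card : ℝ≥0∞) * (ENNReal.ofReal (r0 ^ n) * μ B)
          = ∑ y ∈ T, μ (D y) := by
            rw [Finset.sum_congr rfl fun y _ => hvolD y, Finset.sum_const, nsmul_eq_mul]
        _ = μ (⋃ y ∈ T, D y) :=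
            (measure_biUnion_finset hdisj fun y _ => hmeasD y).symm
        _ ≤ μ {w | ν w ≤ R} := measure_mono hsub
        _ = ENNReal.ofReal (R ^ n) * μ B := hscale hR
    have hcount' : (T.card : ℝ≥0∞) * ENNReal.ofReal (r0 ^ n) ≤ ENNReal.ofReal (R ^ n) := by
      rw [← mul_assoc] at hcount
      exact (ENNReal.mul_le_mul_iff_left hBpos.ne' hBfin.ne).1 hcount
    have hreal : (T.card : ℝ) * r0 ^ n ≤ R ^ n := by
      have := ENNReal.toReal_mono ENNReal.ofReal_ne_top hcount'
      rwa [ENNReal.toReal_mul, ENNReal.toReal_natCast,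
        ENNReal.toReal_ofReal (by positivity), ENNReal.toReal_ofReal (by positivity)] at this
    have hfinal : (T.card : ℝ) ≤ (N : ℝ) := by
      have h1 : (T.card : ℝ) ≤ (R / r0) ^ n := by
        rw [div_pow, le_div_iff₀ (by positivity)]
        exact hreal
      have h2 : (R / r0) ^ n = (((1 + ρ ^ s / 2) / (ρ ^ s / 2)) ^ (1 / s)) ^ n := by
        congr 1
        rw [hRdef, hr0def, ← Real.div_rpow (by linarith) (by linarith)]
      exact h1.trans (h2 ▸ hN)
    exact_mod_cast hfinal
  -- choose a maximal separated set
  set P : ℕ → Prop := fun m => ∃ T : Finset (Fin n → ℝ),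
    (∀ y ∈ T, ν y ≤ 1) ∧ ((T : Set (Fin n → ℝ)).Pairwise fun a b => ρ < ν (a - b)) ∧
      T.card = m with hP
  have hP0 : P 0 := ⟨∅, by simp, by simp, rfl⟩
  have hPm : P (Nat.findGreatest P N) := Nat.findGreatest_spec (Nat.zero_le N) hP0
  obtain ⟨S, hSB, hSsep, hScard⟩ := hPm
  refine ⟨S, by rw [hScard]; exact Nat.findGreatest_le N, ?_⟩
  intro x hx
  by_contra hcon
  push_neg at hcon
  have hcon' : ∀ y ∈ S, ρ < ν (x - y) := fun y hy => hcon y hy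
  have hxS : x ∉ S := by
    intro h
    have := hcon' x h
    rw [sub_self, hν, lpnorm_zero hp0.ne' hn] at this
    linarith
  have hsymm : Symmetric fun a b : Fin n → ℝ => ρ < ν (a - b) := by
    intro a b h
    rwa [← hneg (a - b), neg_sub] at h
  have hPnext : P (S.card + 1) := by
    refine ⟨insert x S, ?_, ?_, Finset.card_insert_of_notMem hxS⟩
    · intro y hy
      rcases Finset.mem_insert.1 hy with rfl | hy
      · exact hx
      · exact hSB y hy
    · rw [Finset.coe_insert]
      haveI : Std.Symm (fun a b : Fin n → ℝ => ρ < ν (a - b)) := ⟨fun a b h => hsymm h⟩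
      refine (Set.pairwise_insert_of_symm).2 ⟨hSsep, fun b hb _ => hcon' b hb⟩
  have hle : S.card + 1 ≤ N := by
    obtain ⟨T, hTB, hTsep, hTcard⟩ := hPnext
    rw [← hTcard]
    exact card_bound T hTB hTsep
  have hlt : Nat.findGreatest P N < S.card + 1 := hScard ▸ Nat.lt_succ_self _
  exact Nat.findGreatest_is_greatest hlt hle hPnext

end Cover

theorem entropy_lp_upper_q_le_p (p q : ℝ≥0∞) (hq : 0 < q) (hqp : q ≤ p)
    (k n : ℕ) (hk : 0 < k) (hn : 0 < n) :
    entropyLp p q n k ≤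
      4 ^ (((min 1 p)⁻¹).toReal) * 2 ^ (-(((k : ℝ) - 1) / n)) *
        (n : ℝ) ^ (q⁻¹.toReal - p⁻¹.toReal) := by
  classical
  have hp0 : 0 < p := lt_of_lt_of_le hq hqp
  set s : ℝ := (min 1 p).toReal with hsdef
  have hmin0 : (min 1 p) ≠ 0 := (lt_min zero_lt_one hp0).ne'
  have hmint : (min 1 p) ≠ ∞ := ne_top_of_le_ne_top ENNReal.one_ne_top (min_le_left _ _)
  have hs0 : 0 < s := ENNReal.toReal_pos hmin0 hmint
  have hexp : (((min 1 p)⁻¹).toReal : ℝ) = s⁻¹ := by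
    rw [ENNReal.toReal_inv]
  set a : ℝ := ((k : ℝ) - 1) / n with hadef
  have ha0 : 0 ≤ a := by
    apply div_nonneg _ (by positivity)
    have : (1 : ℝ) ≤ (k : ℝ) := by exact_mod_cast hk
    linarith
  set δ : ℝ := q⁻¹.toReal - p⁻¹.toReal with hδdef
  have hδ0 : 0 ≤ δ := by
    rw [hδdef, sub_nonneg]
    exact ENNReal.toReal_mono (ENNReal.inv_ne_top.2 hq.ne') (ENNReal.inv_le_inv' hqp)
  set ρ : ℝ := 4 ^ (((min 1 p)⁻¹).toReal) * 2 ^ (-(((k : ℝ) - 1) / (n : ℝ))) with hρdef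
  have hρeq : ρ = 4 ^ (s⁻¹ : ℝ) * 2 ^ (-a) := by rw [hρdef, hexp, hadef]
  have hρ0 : 0 < ρ := by
    rw [hρeq]
    positivity
  -- the covering in ℓ_p
  have hcover : ∃ S : Finset (Fin n → ℝ), S.card ≤ 2 ^ (k - 1) ∧
      ∀ x : Fin n → ℝ, lpnorm p x ≤ 1 → ∃ y ∈ S, lpnorm p (x - y) ≤ ρ := by
    rcases le_or_gt 1 ρ with h1 | h1
    · refine ⟨{0}, by rw [Finset.card_singleton]; exact Nat.one_le_two_pow,
        fun x hx => ⟨0, Finset.mem_singleton_self 0, ?_⟩⟩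
      rw [sub_zero]
      exact hx.trans h1
    · apply lpnorm_exists_cover hp0 hn hρ0
      have hρs : 0 < ρ ^ s := Real.rpow_pos_of_pos hρ0 s
      have hρs2 : ρ ^ s ≤ 2 :=
        (Real.rpow_le_one hρ0.le h1.le hs0.le).trans one_le_two
      have h2 : (1 + ρ ^ s / 2) / (ρ ^ s / 2) ≤ 4 / ρ ^ s := by
        rw [div_le_div_iff₀ (by positivity) hρs]
        nlinarith
      have hρs_eq : ρ ^ s = 4 * 2 ^ (-(a * s)) := by
        rw [hρeq, Real.mul_rpow (by positivity) (by positivity),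
          ← Real.rpow_mul (by norm_num : (0:ℝ) ≤ 4),
          ← Real.rpow_mul (by norm_num : (0:ℝ) ≤ 2),
          inv_mul_cancel₀ hs0.ne', Real.rpow_one, neg_mul]
      have h2pos : (0:ℝ) < 2 ^ (a * s) := Real.rpow_pos_of_pos two_pos _
      have h4 : (4 / ρ ^ s) ^ (1/s) = 2 ^ a := by
        have h48 : (4:ℝ) / (4 * 2 ^ (-(a * s))) = 2 ^ (a * s) := by
          rw [Real.rpow_neg (by norm_num : (0:ℝ) ≤ 2)]
          field_simp
        rw [hρs_eq, h48, ← Real.rpow_mul (by norm_num : (0:ℝ) ≤ 2), one_div,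
          mul_inv_cancel_right₀ hs0.ne']
      have h3 : ((1 + ρ ^ s / 2) / (ρ ^ s / 2)) ^ (1/s) ≤ 2 ^ a :=
        h4 ▸ Real.rpow_le_rpow (by positivity) h2 (by positivity)
      have h5 : (((1 + ρ ^ s / 2) / (ρ ^ s / 2)) ^ (1/s)) ^ n ≤ ((2:ℝ) ^ a) ^ n :=
        pow_le_pow_left₀ (by positivity) h3 n
      refine h5.trans ?_
      have h6 : ((2:ℝ) ^ a) ^ n = 2 ^ ((k:ℝ) - 1) := by
        rw [← Real.rpow_natCast ((2:ℝ) ^ a) n, ← Real.rpow_mul (by norm_num : (0:ℝ) ≤ 2),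
          hadef, div_mul_cancel₀ _ (by positivity : ((n:ℝ)) ≠ 0)]
      rw [h6]
      have h7 : (2:ℝ) ^ ((k:ℝ) - 1) = ((2 ^ (k-1) : ℕ) : ℝ) := by
        have : ((k:ℝ) - 1) = ((k - 1 : ℕ) : ℝ) := by
          rw [Nat.cast_sub hk]; norm_num
        rw [this, Real.rpow_natCast]
        push_cast
        ring
      rw [h7]
  obtain ⟨S, hScard, hS⟩ := hcover
  have hmem : ρ * (n : ℝ) ^ δ ∈ {r : ℝ | 0 < r ∧ ∃ S : Finset (Fin n → ℝ),
      S.card ≤ 2 ^ (k - 1) ∧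
      ∀ x : Fin n → ℝ, lpnorm p x ≤ 1 → ∃ y ∈ S, lpnorm q (x - y) ≤ r} := by
    refine ⟨by positivity, S, hScard, fun x hx => ?_⟩
    obtain ⟨y, hyS, hy⟩ := hS x hx
    refine ⟨y, hyS, ?_⟩
    calc lpnorm q (x - y) ≤ (n : ℝ) ^ δ * lpnorm p (x - y) := lpnorm_cmp hq hqp hn (x - y)
      _ ≤ (n : ℝ) ^ δ * ρ := by
          exact mul_le_mul_of_nonneg_left hy (by positivity)
      _ = ρ * (n : ℝ) ^ δ := mul_comm _ _
  have hbdd : BddBelow {r : ℝ | 0 < r ∧ ∃ S : Finset (Fin n → ℝ),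
      S.card ≤ 2 ^ (k - 1) ∧
      ∀ x : Fin n → ℝ, lpnorm p x ≤ 1 → ∃ y ∈ S, lpnorm q (x - y) ≤ r} :=
    ⟨0, fun r hr => hr.1.le⟩
  have hle := csInf_le hbdd hmem
  calc entropyLp p q n k ≤ ρ * (n : ℝ) ^ δ := hle
    _ = 4 ^ (((min 1 p)⁻¹).toReal) * 2 ^ (-(((k : ℝ) - 1) / n)) *
        (n : ℝ) ^ (q⁻¹.toReal - p⁻¹.toReal) := by rw [hρdef, hδdef]
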